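/- (Targeted attack lower bound) Let g = f_c - f_j with g(x₀) > 0, and suppose g is Lipschitz with constant L_j on the closed ball B_p(x₀, R) with respect to the ℓp norm. Then for every δ with ‖δ‖_p ≤ min{g(x₀)/L_j, R}, g(x₀ + δ) ≥ 0, so x₀ + δ is not classified as class j in preference to class c. -/
import Mathlib

open scoped ENNReal

/-- targeted attack lower bound.  If `g = f_c - f_j` is Lipschitz with
constant `L > 0` on the closed ℓp ball of radius `R` around `x₀`, and `g x₀ > 0`, then
every `δ` with `‖δ‖_p ≤ min (g x₀ / L) R` satisfies `g (x₀ + δ) ≥ 0`, i.e. `x₀ + δ`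
is not classified as class `j` in preference to class `c`. -/
theorem clever_targeted_lower_bound {d : ℕ} {p : ℝ≥0∞} [Fact (1 ≤ p)]
    (g : PiLp p (fun _ : Fin d => ℝ) → ℝ)
    (x₀ : PiLp p (fun _ : Fin d => ℝ)) (R L : ℝ) (hR : 0 < R) (hL : 0 < L)
    (hLip : ∀ x ∈ Metric.closedBall x₀ R, ∀ y ∈ Metric.closedBall x₀ R,
      |g x - g y| ≤ L * ‖x - y‖)
    (hg : 0 < g x₀) :
    ∀ δ : PiLp p (fun _ : Fin d => ℝ), ‖δ‖ ≤ min (g x₀ / L) R → 0 ≤ g (x₀ + δ) := by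
  intro δ hδ
  have hδR : ‖δ‖ ≤ R := hδ.trans (min_le_right _ _)
  have hδg : ‖δ‖ ≤ g x₀ / L := hδ.trans (min_le_left _ _)
  have hx : x₀ + δ ∈ Metric.closedBall x₀ R := by
    simpa [dist_eq_norm] using hδR
  have hx0 : x₀ ∈ Metric.closedBall x₀ R := Metric.mem_closedBall_self hR.le
  have h := hLip (x₀ + δ) hx x₀ hx0
  have hnorm : ‖x₀ + δ - x₀‖ = ‖δ‖ := by simp
  rw [hnorm] at h
  have : g x₀ - g (x₀ + δ) ≤ L * ‖δ‖ := (abs_le.mp h).1 |> fun h1 => by linarith [(abs_le.mp h).1]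
  have hL' : L * ‖δ‖ ≤ g x₀ := by
    rw [mul_comm]
    exact (le_div_iff₀ hL).mp hδg
  linarith
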